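/- If x is a double with 2^k ≤ |x| < 2^{k+1} and r is any real number that is not an integer multiple of 2^{k-53}, then for every double y, the exact value x + y is distinct from r; hence observing output r rules out x as the value to which noise was added. -/
import Mathlib


/-- A (normal) IEEE 754 double, or zero. -/
def IsDouble (z : ℝ) : Prop :=
  z = 0 ∨ ∃ (s : Bool) (m e : ℤ), 2 ^ 52 ≤ m ∧ m < 2 ^ 53 ∧
    z = (if s then (-1 : ℝ) else 1) * (m : ℝ) * (2 : ℝ) ^ (e - 52)

/-- Correctly rounded value: round a real to the nearest multiple of the ulp of its
own binade (ulp of `t` is `2^(Int.log 2 |t| - 52)`). -/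
noncomputable def fpRound (t : ℝ) : ℝ :=
  ((round (t / (2 : ℝ) ^ (Int.log 2 |t| - 52)) : ℤ) : ℝ) * (2 : ℝ) ^ (Int.log 2 |t| - 52)

lemma two_zpow_add (a b : ℤ) : (2 : ℝ) ^ (a + b) = (2 : ℝ) ^ a * (2 : ℝ) ^ b :=
  zpow_add₀ two_ne_zero a b

lemma two_zpow_toNat (a : ℤ) (h : 0 ≤ a) :
    ((2 : ℝ)) ^ (a.toNat) = (2 : ℝ) ^ a := by
  rw [← zpow_natCast (2 : ℝ) a.toNat, Int.toNat_of_nonneg h]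

/-- A nonzero double is `j * 2^(e-52)` with `2^e ≤ |z| < 2^(e+1)`. -/
lemma isDouble_repr (z : ℝ) (h : IsDouble z) (hz : z ≠ 0) :
    ∃ (j e : ℤ), z = (j : ℝ) * (2 : ℝ) ^ (e - 52) ∧
      (2 : ℝ) ^ e ≤ |z| ∧ |z| < (2 : ℝ) ^ (e + 1) := by
  obtain h0 | ⟨s, m, e, hm1, hm2, hze⟩ := h
  · exact absurd h0 hz
  have hpow : (0 : ℝ) < (2 : ℝ) ^ (e - 52) := zpow_pos (by norm_num) _
  have hm0 : (0 : ℝ) < (m : ℝ) := by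
    have : (0 : ℤ) < m := lt_of_lt_of_le (by norm_num) hm1
    exact_mod_cast this
  have habs : |z| = (m : ℝ) * (2 : ℝ) ^ (e - 52) := by
    rw [hze]; cases s <;>
      simp [abs_mul, abs_of_pos hm0, abs_of_pos hpow]
  have hml : ((2 : ℝ)) ^ (52 : ℕ) ≤ (m : ℝ) := by exact_mod_cast hm1
  have hmu : (m : ℝ) < ((2 : ℝ)) ^ (53 : ℕ) := by exact_mod_cast hm2
  refine ⟨if s then -m else m, e, ?_, ?_, ?_⟩
  · cases s <;> simp [hze]
  · rw [habs]
    have he : (2 : ℝ) ^ e = (2 : ℝ) ^ (52 : ℤ) * (2 : ℝ) ^ (e - 52) := by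
      rw [← two_zpow_add]; ring_nf
    rw [he]
    have : ((2 : ℝ)) ^ (52 : ℤ) = ((2 : ℝ)) ^ (52 : ℕ) := by norm_num
    rw [this]
    exact mul_le_mul_of_nonneg_right hml (le_of_lt hpow)
  · rw [habs]
    have he : (2 : ℝ) ^ (e + 1) = (2 : ℝ) ^ (53 : ℤ) * (2 : ℝ) ^ (e - 52) := by
      rw [← two_zpow_add]; ring_nf
    rw [he]
    have : ((2 : ℝ)) ^ (53 : ℤ) = ((2 : ℝ)) ^ (53 : ℕ) := by norm_num
    rw [this]
    exact mul_lt_mul_of_pos_right hmu hpow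

/-- if `x` is a double with `2^k ≤ |x| < 2^(k+1)` and `r` is not an
integer multiple of `2^(k-53)`, then for every double `y` the (correctly rounded)
sum `x ⊕ y` is distinct from `r`; observing output `r` rules out `x`. -/
theorem output_rules_out_input (x : ℝ) (k : ℤ) (hx : IsDouble x)
    (hxk : (2 : ℝ) ^ k ≤ |x| ∧ |x| < (2 : ℝ) ^ (k + 1))
    (r : ℝ) (hr : ¬ ∃ n : ℤ, r = (n : ℝ) * (2 : ℝ) ^ (k - 53)) :
    ∀ y : ℝ, IsDouble y → fpRound (x + y) ≠ r := by
  intro y hy hEq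
  apply hr
  rw [← hEq]
  have h2 : (0 : ℝ) < 2 := by norm_num
  have hx0 : x ≠ 0 := by
    intro h
    rw [h, abs_zero] at hxk
    exact absurd hxk.1 (not_le.mpr (zpow_pos h2 k))
  obtain ⟨a, e, hxrep, hxlow, hxhigh⟩ := isDouble_repr x hx hx0
  have hek : e = k := by
    have h1 : e < k + 1 :=
      (zpow_lt_zpow_iff_right₀ (by norm_num : (1:ℝ) < 2)).mp (lt_of_le_of_lt hxlow hxk.2)
    have h2' : k < e + 1 :=
      (zpow_lt_zpow_iff_right₀ (by norm_num : (1:ℝ) < 2)).mp (lt_of_le_of_lt hxk.1 hxhigh)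
    omega
  rw [hek] at hxrep
  set t := x + y with ht
  by_cases hts : t = 0
  · exact ⟨0, by simp [fpRound, hts]⟩
  set L := Int.log 2 |t| with hL
  have hgpos : (0 : ℝ) < (2 : ℝ) ^ (L - 52) := zpow_pos h2 _
  by_cases hLk : k - 1 ≤ L
  · refine ⟨round (t / (2:ℝ)^(L-52)) * 2 ^ ((L + 1 - k).toNat), ?_⟩
    unfold fpRound
    rw [← hL]
    push_cast
    rw [two_zpow_toNat _ (by omega), mul_assoc, ← two_zpow_add]
    have hexp : (L + 1 - k) + (k - 53) = L - 52 := by ring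
    rw [hexp]
  · push_neg at hLk
    have htub : |t| < (2 : ℝ) ^ (L + 1) := by
      have := Int.lt_zpow_succ_log_self (b := 2) (by norm_num) |t|
      simpa [← hL] using this
    have htub2 : |t| < (2 : ℝ) ^ (k - 1) :=
      lt_of_lt_of_le htub (zpow_le_zpow_right₀ one_le_two (by omega))
    have hylb : (2 : ℝ) ^ (k - 1) < |y| := by
      have h1 : |x| ≤ |t| + |y| := by
        calc |x| = |t - y| := by rw [ht]; ring_nf
        _ ≤ |t| + |y| := abs_sub _ _
      have hk2 : (2 : ℝ) ^ k = 2 * (2 : ℝ) ^ (k - 1) := by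
        rw [show k = 1 + (k - 1) by ring, two_zpow_add]; norm_num
      nlinarith [hxk.1]
    have hy0 : y ≠ 0 := by
      intro h; rw [h, abs_zero] at hylb
      exact absurd hylb (not_lt.mpr (le_of_lt (zpow_pos h2 _)))
    obtain ⟨j, f, hyrep, hylow, hyhigh⟩ := isDouble_repr y hy hy0
    have hfk : k - 1 ≤ f := by
      have : (2:ℝ) ^ (k-1) < (2:ℝ) ^ (f+1) := lt_trans hylb hyhigh
      have := (zpow_lt_zpow_iff_right₀ (by norm_num : (1:ℝ) < 2)).mp this
      omega
    set N : ℤ := a * 2 + j * 2 ^ ((f - k + 1).toNat) with hN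
    have htN : t = (N : ℝ) * (2 : ℝ) ^ (k - 53) := by
      rw [ht, hxrep, hyrep, hN]
      push_cast
      rw [two_zpow_toNat _ (by omega), add_mul, mul_assoc, mul_assoc, ← two_zpow_add]
      have hexp : (f - k + 1) + (k - 53) = f - 52 := by ring
      rw [hexp]
      have e1 : (2 : ℝ) ^ (k - 52) = 2 * (2 : ℝ) ^ (k - 53) := by
        rw [show k - 52 = 1 + (k - 53) by ring, two_zpow_add]; norm_num
      rw [e1]
    set M : ℤ := N * 2 ^ ((k - 1 - L).toNat) with hM
    have hdiv : t / (2 : ℝ) ^ (L - 52) = (M : ℝ) := by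
      rw [htN, hM]
      push_cast
      rw [two_zpow_toNat _ (by omega), div_eq_iff (ne_of_gt hgpos), mul_assoc,
        ← two_zpow_add, show (k - 1 - L) + (L - 52) = k - 53 by ring]
    refine ⟨N, ?_⟩
    unfold fpRound
    rw [← hL, hdiv, round_intCast, ← hdiv, div_mul_cancel₀ _ (ne_of_gt hgpos), htN]
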